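/- The function I₀(x₁,…,x₆) = (x₂x₄ − x₁x₆)² + 4x₁x₃x₄x₅ is a first integral of the vector field X: its gradient is orthogonal to X at every point of M, i.e., Σᵢ (∂I₀/∂xᵢ)·Xᵢ = 0 whenever x₁²+…+x₆² = 1. -/

import Mathlib

theorem stmt4 (x₁ x₂ x₃ x₄ x₅ x₆ : ℝ)
    (X₁ X₂ X₃ X₄ X₅ X₆ : ℝ)
    (hX₁ : X₁ = x₂ * (x₁^2 - x₄^2))
    (hX₂ : X₂ = -x₁^3 + (x₃^2 + x₄^2 + x₅^2) * x₁ + 2 * x₃ * x₄ * x₅)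
    (hX₃ : X₃ = (x₃ * x₄ + x₁ * x₅) * x₆ - x₂ * (x₁ * x₃ + x₄ * x₅))
    (hX₄ : X₄ = (x₁^2 - x₄^2) * x₆)
    (hX₅ : X₅ = (x₁ * x₃ + x₄ * x₅) * x₆ - x₂ * (x₃ * x₄ + x₁ * x₅))
    (hX₆ : X₆ = 2 * x₄^3 + (x₂^2 + x₆^2 - 1) * x₄ - 2 * x₁ * x₃ * x₅)
    (h : x₁^2 + x₂^2 + x₃^2 + x₄^2 + x₅^2 + x₆^2 = 1) :
    deriv (fun t : ℝ =>
      ((x₂ + t * X₂) * (x₄ + t * X₄) - (x₁ + t * X₁) * (x₆ + t * X₆))^2 +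
      4 * (x₁ + t * X₁) * (x₃ + t * X₃) * (x₄ + t * X₄) * (x₅ + t * X₅)) 0 = 0 := by
  have hd : ∀ a b : ℝ, HasDerivAt (fun t : ℝ => a + t * b) b (0 : ℝ) := by
    intro a b
    simpa using ((hasDerivAt_id (0 : ℝ)).mul_const b).const_add a
  have h1 := hd x₁ X₁
  have h2 := hd x₂ X₂
  have h3 := hd x₃ X₃
  have h4 := hd x₄ X₄
  have h5 := hd x₅ X₅
  have h6 := hd x₆ X₆
  have H := ((((h2.mul h4).sub (h1.mul h6)).pow 2).add
    ((((h1.const_mul 4).mul h3).mul h4).mul h5))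
  rw [show (fun t : ℝ =>
      ((x₂ + t * X₂) * (x₄ + t * X₄) - (x₁ + t * X₁) * (x₆ + t * X₆))^2 +
      4 * (x₁ + t * X₁) * (x₃ + t * X₃) * (x₄ + t * X₄) * (x₅ + t * X₅)) =
    (fun t : ℝ =>
      ((x₂ + t * X₂) * (x₄ + t * X₄) - (x₁ + t * X₁) * (x₆ + t * X₆))^2 +
      4 * (x₁ + t * X₁) * (x₃ + t * X₃) * (x₄ + t * X₄) * (x₅ + t * X₅)) from rfl]
  rw [(show HasDerivAt (fun t : ℝ =>
      ((x₂ + t * X₂) * (x₄ + t * X₄) - (x₁ + t * X₁) * (x₆ + t * X₆))^2 +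
      4 * (x₁ + t * X₁) * (x₃ + t * X₃) * (x₄ + t * X₄) * (x₅ + t * X₅)) _ 0 from H).deriv]
  simp only [Pi.mul_apply, Pi.sub_apply, Pi.pow_apply, Nat.cast_ofNat]
  subst hX₁ hX₂ hX₃ hX₄ hX₅ hX₆
  ring_nf
  linear_combination (2 * x₁^2 * x₄ * x₆ - 2 * x₁ * x₂ * x₄^2) * h
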